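/- Fix ξ = (ξ₁,ξ₂) ∈ 𝔻 and write |ξ|² = ξ₁²+ξ₂². Suppose h₁, h₂ : closure(𝔻) → ℝ are continuous on the closed unit disk, harmonic in 𝔻, and satisfy for all (x,y) ∈ ∂𝔻: h₁(x,y) = ((x−ξ₁)²−(y−ξ₂)²)/((x−ξ₁)²+(y−ξ₂)²)² and h₂(x,y) = 2(x−ξ₁)(y−ξ₂)/((x−ξ₁)²+(y−ξ₂)²)². Then at the point ξ: h₁(ξ) = (ξ₁²−ξ₂²)/(1−|ξ|²)², h₂(ξ) = 2ξ₁ξ₂/(1−|ξ|²)², ∂h₁/∂x(ξ) = ∂h₂/∂y(ξ) = 2ξ₁/(1−|ξ|²)³, ∂h₁/∂y(ξ) = −∂h₂/∂x(ξ) = −2ξ₂/(1−|ξ|²)³, ∂²h₁/∂x²(ξ) = ∂²h₂/∂x∂y(ξ) = 2(1+2|ξ|²)/(1−|ξ|²)⁴, ∂²h₁/∂y²(ξ) = −2(1+2|ξ|²)/(1−|ξ|²)⁴, and ∂²h₁/∂x∂y(ξ) = ∂²h₂/∂x²(ξ) = ∂²h₂/∂y²(ξ) = 0. -/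

import Mathlib

noncomputable section

open Metric

/-- Partial derivative in the `x` direction of a scalar function, identifying `ℝ²` with `ℂ`
via `z = x + iy`. -/
def px (f : ℂ → ℝ) (z : ℂ) : ℝ := fderiv ℝ f z 1

/-- Partial derivative in the `y` direction. -/
def py (f : ℂ → ℝ) (z : ℂ) : ℝ := fderiv ℝ f z Complex.I

/-- `f` is harmonic on `s`: it is `C²` there and its Laplacian vanishes on `s`. -/
def HarmonicOnSet (f : ℂ → ℝ) (s : Set ℂ) : Prop :=
  ContDiffOn ℝ 2 f s ∧ ∀ z ∈ s, px (px f) z + py (py f) z = 0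

-- L1: derivative of re/im composed with complex-differentiable function
lemma re_fderiv {F : ℂ → ℂ} {F' z : ℂ} (h : HasDerivAt F F' z) (v : ℂ) :
    fderiv ℝ (fun w => (F w).re) z v = (F' * v).re := by
  have h1 : HasFDerivAt F (ContinuousLinearMap.smulRight (1 : ℂ →L[ℂ] ℂ) F') z := h.hasFDerivAt
  have h2 : HasFDerivAt (fun w => (F w).re)
      (Complex.reCLM.comp ((ContinuousLinearMap.smulRight (1 : ℂ →L[ℂ] ℂ) F').restrictScalars ℝ)) z :=
    (Complex.reCLM.hasFDerivAt).comp z (h1.restrictScalars ℝ)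
  rw [h2.fderiv]
  simp [mul_comm]

lemma im_fderiv {F : ℂ → ℂ} {F' z : ℂ} (h : HasDerivAt F F' z) (v : ℂ) :
    fderiv ℝ (fun w => (F w).im) z v = (F' * v).im := by
  have h1 : HasFDerivAt F (ContinuousLinearMap.smulRight (1 : ℂ →L[ℂ] ℂ) F') z := h.hasFDerivAt
  have h2 : HasFDerivAt (fun w => (F w).im)
      (Complex.imCLM.comp ((ContinuousLinearMap.smulRight (1 : ℂ →L[ℂ] ℂ) F').restrictScalars ℝ)) z :=
    (Complex.imCLM.hasFDerivAt).comp z (h1.restrictScalars ℝ)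
  rw [h2.fderiv]
  simp [mul_comm]

lemma dir2_nonpos {u : ℂ → ℝ} {U : Set ℂ} (hU : IsOpen U) (hu : ContDiffOn ℝ 2 u U)
    {w : ℂ} (hw : w ∈ U) (c : ℂ) (hmax : IsLocalMax u w) :
    fderiv ℝ (fun w' => fderiv ℝ u w' c) w c ≤ 0 := by
  by_contra hs
  push_neg at hs
  set s := fderiv ℝ (fun w' => fderiv ℝ u w' c) w c with hsdef
  -- differentiability facts
  have hud : ∀ z ∈ U, DifferentiableAt ℝ u z := fun z hz =>
    (hu.contDiffAt (hU.mem_nhds hz)).differentiableAt two_ne_zero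
  have hfd1 : ContDiffOn ℝ 1 (fderiv ℝ u) U := by
    exact hu.fderiv_of_isOpen (m := 1) hU (by norm_num)
  have hfd : DifferentiableAt ℝ (fun w' => fderiv ℝ u w' c) w := by
    have h1 : DifferentiableAt ℝ (fderiv ℝ u) w :=
      (hfd1.contDiffAt (hU.mem_nhds hw)).differentiableAt one_ne_zero
    exact ((ContinuousLinearMap.apply ℝ ℝ c).differentiableAt).comp w h1
  -- the curve
  set P : ℝ → ℂ := fun t => w + t • c with hPdef
  have hP : ∀ t : ℝ, HasDerivAt P c t := by
    intro t
    simpa [hPdef] using ((hasDerivAt_id t).smul_const c).const_add w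
  have hP0 : P 0 = w := by simp [hPdef]
  have hPc : Continuous P := by continuity
  set G : ℝ → ℝ := fun t => u (P t) with hGdef
  set φ : ℝ → ℝ := fun t => fderiv ℝ u (P t) c with hφdef
  have hG : ∀ t : ℝ, P t ∈ U → HasDerivAt G (φ t) t := fun t ht =>
    (hud _ ht).hasFDerivAt.comp_hasDerivAt t (hP t)
  have hφ : HasDerivAt φ s 0 := by
    have := (hP0 ▸ hfd.hasFDerivAt).comp_hasDerivAt 0 (hP 0)
    simpa [hP0, hφdef, hPdef, Function.comp_def] using this
  have hφ0 : φ 0 = 0 := by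
    have : fderiv ℝ u w = 0 := hmax.fderiv_eq_zero
    simp [hφdef, hP0, this]
  -- eventual positivity of φ on the right
  have hslope : Filter.Tendsto (fun t => φ t / t) (nhdsWithin 0 {(0:ℝ)}ᶜ) (nhds s) := by
    have h0 := hasDerivAt_iff_tendsto_slope.1 hφ
    have : (slope φ 0) = fun t => φ t / t := by
      funext t; simp [slope_def_field, hφ0]
    rwa [this] at h0
  have E1 : ∀ᶠ t in nhdsWithin (0:ℝ) (Set.Ioi 0), 0 < φ t := by
    have h2 : ∀ᶠ t in nhdsWithin (0:ℝ) {(0:ℝ)}ᶜ, 0 < φ t / t :=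
      hslope.eventually (lt_mem_nhds hs)
    have h3 : ∀ᶠ t in nhdsWithin (0:ℝ) (Set.Ioi 0), 0 < φ t / t :=
      h2.filter_mono (nhdsWithin_mono 0 (fun t ht => ne_of_gt ht))
    filter_upwards [h3, self_mem_nhdsWithin] with t ht ht'
    rw [Set.mem_Ioi] at ht'
    rcases div_pos_iff.1 ht with h | h
    · exact h.1
    · linarith [h.2, ht']
  obtain ⟨δ₁, hδ₁, hsub1⟩ := mem_nhdsGT_iff_exists_Ioc_subset.1 E1
  have E2 : ∀ᶠ t in nhds (0:ℝ), P t ∈ U ∧ u (P t) ≤ u w := by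
    have e2 : ∀ᶠ t in nhds (0:ℝ), P t ∈ U :=
      (hPc.continuousAt).eventually_mem (hP0 ▸ hU.mem_nhds hw)
    have e3 : ∀ᶠ t in nhds (0:ℝ), u (P t) ≤ u w := by
      have ht : Filter.Tendsto P (nhds 0) (nhds w) := by
        simpa [hPdef] using hPc.tendsto 0
      exact ht.eventually hmax
    exact e2.and e3
  obtain ⟨δ₂, hδ₂, hsub2⟩ := Metric.eventually_nhds_iff.1 E2
  set δ := min δ₁ (δ₂ / 2) with hδdef
  have hδpos : 0 < δ := lt_min hδ₁ (by linarith)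
  have hmemU : ∀ t ∈ Set.Icc (0:ℝ) δ, P t ∈ U := by
    intro t ht
    have : |t - 0| < δ₂ := by
      rw [sub_zero, abs_of_nonneg ht.1]
      exact lt_of_le_of_lt ht.2 (lt_of_le_of_lt (min_le_right _ _) (by linarith))
    exact (hsub2 (by simpa [Real.dist_eq] using this)).1
  have hcont : ContinuousOn G (Set.Icc 0 δ) := fun t ht =>
    ((hG t (hmemU t ht)).continuousAt).continuousWithinAt
  have hmono : StrictMonoOn G (Set.Icc 0 δ) := by
    apply strictMonoOn_of_deriv_pos (convex_Icc 0 δ) hcont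
    intro t ht
    rw [interior_Icc] at ht
    have hPU : P t ∈ U := hmemU t ⟨le_of_lt ht.1, le_of_lt ht.2⟩
    rw [(hG t hPU).deriv]
    exact hsub1 ⟨ht.1, le_trans (le_of_lt ht.2) (min_le_left _ _)⟩
  have h1 : G 0 < G δ := hmono (Set.left_mem_Icc.2 (le_of_lt hδpos))
    (Set.right_mem_Icc.2 (le_of_lt hδpos)) hδpos
  have h2 : G δ ≤ u w := by
    have : |δ - 0| < δ₂ := by
      rw [sub_zero, abs_of_pos hδpos]
      exact lt_of_le_of_lt (min_le_right _ _) (by linarith)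
    exact (hsub2 (by simpa [Real.dist_eq] using this)).2
  have h3 : G 0 = u w := by simp [hGdef, hP0]
  linarith

-- differentiability of directional derivative function for C² functions
lemma px_diffAt {u : ℂ → ℝ} {U : Set ℂ} (hU : IsOpen U) (hu : ContDiffOn ℝ 2 u U)
    {w : ℂ} (hw : w ∈ U) (c : ℂ) :
    DifferentiableAt ℝ (fun w' => fderiv ℝ u w' c) w := by
  have hfd1 : ContDiffOn ℝ 1 (fderiv ℝ u) U := hu.fderiv_of_isOpen (m := 1) hU (by norm_num)
  have h1 : DifferentiableAt ℝ (fderiv ℝ u) w :=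
    (hfd1.contDiffAt (hU.mem_nhds hw)).differentiableAt one_ne_zero
  exact ((ContinuousLinearMap.apply ℝ ℝ c).differentiableAt).comp w h1

-- the quadratic q z = z.re^2 + z.im^2
def qq : ℂ → ℝ := fun z => z.re ^ 2 + z.im ^ 2

lemma qq_hasfd (z : ℂ) :
    HasFDerivAt qq ((2 * z.re) • Complex.reCLM + (2 * z.im) • Complex.imCLM) z := by
  have h1 : HasFDerivAt (fun w : ℂ => w.re ^ 2) ((2 * z.re) • Complex.reCLM) z := by
    have h0 := (Complex.reCLM.hasFDerivAt (x := z)).mul (Complex.reCLM.hasFDerivAt (x := z))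
    have he : ((2 * z.re) • Complex.reCLM : ℂ →L[ℝ] ℝ)
        = z.re • Complex.reCLM + z.re • Complex.reCLM := by rw [two_mul, add_smul]
    rw [he]; exact h0.congr_of_eventuallyEq (Filter.Eventually.of_forall fun w => by simp [pow_two])
  have h2 : HasFDerivAt (fun w : ℂ => w.im ^ 2) ((2 * z.im) • Complex.imCLM) z := by
    have h0 := (Complex.imCLM.hasFDerivAt (x := z)).mul (Complex.imCLM.hasFDerivAt (x := z))
    have he : ((2 * z.im) • Complex.imCLM : ℂ →L[ℝ] ℝ)
        = z.im • Complex.imCLM + z.im • Complex.imCLM := by rw [two_mul, add_smul]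
    rw [he]; exact h0.congr_of_eventuallyEq (Filter.Eventually.of_forall fun w => by simp [pow_two])
  exact h1.add h2

lemma qq_fderiv (z c : ℂ) : fderiv ℝ qq z c = 2 * z.re * c.re + 2 * z.im * c.im := by
  rw [(qq_hasfd z).fderiv]; simp [mul_assoc]

lemma qq_fderiv2 (z c : ℂ) :
    fderiv ℝ (fun w => fderiv ℝ qq w c) z c = 2 * c.re ^ 2 + 2 * c.im ^ 2 := by
  have he : (fun w => fderiv ℝ qq w c)
      = fun w => ((2 * c.re) • Complex.reCLM + (2 * c.im) • Complex.imCLM : ℂ →L[ℝ] ℝ) w := by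
    funext w; rw [qq_fderiv]; simp; ring
  rw [he, ContinuousLinearMap.fderiv]
  simp; ring

-- maximum principle, ≤ version
lemma maxle {u : ℂ → ℝ} (hc : ContinuousOn u (closedBall 0 1))
    (hC2 : ContDiffOn ℝ 2 u (ball 0 1))
    (hlap : ∀ z ∈ ball (0:ℂ) 1, fderiv ℝ (fun w => fderiv ℝ u w 1) z 1 +
      fderiv ℝ (fun w => fderiv ℝ u w Complex.I) z Complex.I = 0)
    (hbd : ∀ z ∈ sphere (0:ℂ) 1, u z ≤ 0) :
    ∀ z ∈ closedBall (0:ℂ) 1, u z ≤ 0 := by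
  intro z₀ hz₀
  apply le_of_forall_pos_le_add
  intro ε hε
  -- the perturbed function
  set v : ℂ → ℝ := fun z => u z + ε * qq z with hvdef
  have hqC2 : ContDiff ℝ 2 qq :=
    (Complex.reCLM.contDiff.pow 2).add (Complex.imCLM.contDiff.pow 2)
  have hqc : Continuous qq := hqC2.continuous
  have hvc : ContinuousOn v (closedBall 0 1) := hc.add ((hqc.continuousOn).const_smul ε)
  obtain ⟨m, hm, hmax⟩ := (isCompact_closedBall (0:ℂ) 1).exists_isMaxOn
    ⟨0, by simp⟩ hvc
  have hqnonneg : 0 ≤ qq z₀ := by unfold qq; positivity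
  have hsphere_val : ∀ z ∈ sphere (0:ℂ) 1, v z ≤ ε := by
    intro z hz
    have h1 : qq z = 1 := by
      have : ‖z‖ = 1 := by simpa using hz
      have h2 : Complex.normSq z = 1 := by
        rw [← Complex.sq_norm, this]; norm_num
      simpa [qq, Complex.normSq_apply, pow_two] using h2
    have := hbd z hz
    simp only [hvdef, h1, mul_one]
    linarith
  -- the max is on the sphere
  have hmsphere : m ∈ sphere (0:ℂ) 1 := by
    by_contra hms
    have hmball : m ∈ ball (0:ℂ) 1 := by
      rcases lt_or_eq_of_le (mem_closedBall.1 hm) with h | h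
      · exact mem_ball.2 h
      · exact absurd (mem_sphere.2 h) hms
    -- v is C² on ball and has a local max at m
    have hvC2 : ContDiffOn ℝ 2 v (ball 0 1) :=
      hC2.add ((hqC2.const_smul ε).contDiffOn)
    have hloc : IsLocalMax v m :=
      hmax.isLocalMax (Filter.mem_of_superset (isOpen_ball.mem_nhds hmball)
        ball_subset_closedBall)
    have hd1 := dir2_nonpos isOpen_ball hvC2 hmball 1 hloc
    have hdI := dir2_nonpos isOpen_ball hvC2 hmball Complex.I hloc
    -- compute the Laplacian of v at m
    have hud : ∀ z ∈ ball (0:ℂ) 1, DifferentiableAt ℝ u z := fun z hz =>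
      (hC2.contDiffAt (isOpen_ball.mem_nhds hz)).differentiableAt two_ne_zero
    have hfe : ∀ c : ℂ, (fun w => fderiv ℝ v w c) =ᶠ[nhds m]
        (fun w => fderiv ℝ u w c + ε * fderiv ℝ qq w c) := by
      intro c
      filter_upwards [isOpen_ball.mem_nhds hmball] with w hw
      have : fderiv ℝ v w = fderiv ℝ u w + ε • fderiv ℝ qq w := by
        have hq : DifferentiableAt ℝ (fun z => ε * qq z) w :=
          ((qq_hasfd w).differentiableAt).const_mul ε
        rw [hvdef]
        rw [fderiv_fun_add (hud w hw) hq]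
        congr 1
        exact fderiv_const_mul (qq_hasfd w).differentiableAt ε
      rw [this]; simp
    have hvpx : ∀ c : ℂ, fderiv ℝ (fun w => fderiv ℝ v w c) m c =
        fderiv ℝ (fun w => fderiv ℝ u w c) m c + ε * (2 * c.re ^ 2 + 2 * c.im ^ 2) := by
      intro c
      rw [(hfe c).fderiv_eq]
      have hept : ∀ w, fderiv ℝ qq w c
          = ((2 * c.re) • Complex.reCLM + (2 * c.im) • Complex.imCLM : ℂ →L[ℝ] ℝ) w := by
        intro w; rw [qq_fderiv]; simp; ring
      have hqd : DifferentiableAt ℝ (fun w => ε * fderiv ℝ qq w c) m := by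
        simp only [hept]
        exact (((2 * c.re) • Complex.reCLM + (2 * c.im) • Complex.imCLM : ℂ →L[ℝ] ℝ)
          |>.differentiableAt).const_mul ε
      rw [fderiv_fun_add (px_diffAt isOpen_ball hC2 hmball c) hqd]
      simp only [ContinuousLinearMap.add_apply]
      congr 1
      rw [fderiv_const_mul]
      · simp [qq_fderiv2]
      · simp only [hept]
        exact (((2 * c.re) • Complex.reCLM + (2 * c.im) • Complex.imCLM : ℂ →L[ℝ] ℝ)).differentiableAt
    have h1 := hvpx 1
    have hI := hvpx Complex.I
    simp only [Complex.one_re, Complex.one_im, Complex.I_re, Complex.I_im] at h1 hI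
    have := hlap m hmball
    nlinarith [hd1, hdI]
  -- conclude
  have h1 : v z₀ ≤ v m := hmax hz₀
  have h2 : v m ≤ ε := hsphere_val m hmsphere
  have : u z₀ + ε * qq z₀ ≤ ε := by
    calc u z₀ + ε * qq z₀ = v z₀ := rfl
    _ ≤ ε := le_trans h1 h2
  nlinarith

lemma pxx_sub {u k : ℂ → ℝ} {U : Set ℂ} (hU : IsOpen U) (h2u : ContDiffOn ℝ 2 u U)
    (h2k : ContDiffOn ℝ 2 k U) {z : ℂ} (hz : z ∈ U) (c : ℂ) :
    fderiv ℝ (fun w => fderiv ℝ (fun x => u x - k x) w c) z c =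
      fderiv ℝ (fun w => fderiv ℝ u w c) z c - fderiv ℝ (fun w => fderiv ℝ k w c) z c := by
  have hud : ∀ w ∈ U, DifferentiableAt ℝ u w := fun w hw =>
    (h2u.contDiffAt (hU.mem_nhds hw)).differentiableAt two_ne_zero
  have hkd : ∀ w ∈ U, DifferentiableAt ℝ k w := fun w hw =>
    (h2k.contDiffAt (hU.mem_nhds hw)).differentiableAt two_ne_zero
  have hfe : (fun w => fderiv ℝ (fun x => u x - k x) w c) =ᶠ[nhds z]
      (fun w => fderiv ℝ u w c - fderiv ℝ k w c) := by
    filter_upwards [hU.mem_nhds hz] with w hw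
    rw [fderiv_fun_sub (hud w hw) (hkd w hw)]; simp
  rw [hfe.fderiv_eq, fderiv_fun_sub (px_diffAt hU h2u hz c) (px_diffAt hU h2k hz c)]
  simp

lemma harm_eq {u k : ℂ → ℝ} (hcu : ContinuousOn u (closedBall 0 1))
    (hck : ContinuousOn k (closedBall 0 1))
    (h2u : ContDiffOn ℝ 2 u (ball 0 1)) (h2k : ContDiffOn ℝ 2 k (ball 0 1))
    (hlapu : ∀ z ∈ ball (0:ℂ) 1, fderiv ℝ (fun w => fderiv ℝ u w 1) z 1 +
      fderiv ℝ (fun w => fderiv ℝ u w Complex.I) z Complex.I = 0)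
    (hlapk : ∀ z ∈ ball (0:ℂ) 1, fderiv ℝ (fun w => fderiv ℝ k w 1) z 1 +
      fderiv ℝ (fun w => fderiv ℝ k w Complex.I) z Complex.I = 0)
    (hb : ∀ z ∈ sphere (0:ℂ) 1, u z = k z) :
    ∀ z ∈ closedBall (0:ℂ) 1, u z = k z := by
  have key : ∀ (f g : ℂ → ℝ), ContinuousOn f (closedBall 0 1) →
      ContinuousOn g (closedBall 0 1) → ContDiffOn ℝ 2 f (ball 0 1) →
      ContDiffOn ℝ 2 g (ball 0 1) →
      (∀ z ∈ ball (0:ℂ) 1, fderiv ℝ (fun w => fderiv ℝ f w 1) z 1 +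
        fderiv ℝ (fun w => fderiv ℝ f w Complex.I) z Complex.I = 0) →
      (∀ z ∈ ball (0:ℂ) 1, fderiv ℝ (fun w => fderiv ℝ g w 1) z 1 +
        fderiv ℝ (fun w => fderiv ℝ g w Complex.I) z Complex.I = 0) →
      (∀ z ∈ sphere (0:ℂ) 1, f z = g z) →
      ∀ z ∈ closedBall (0:ℂ) 1, f z - g z ≤ 0 := by
    intro f g hcf hcg h2f h2g hlf hlg hbfg
    apply maxle (hcf.sub hcg) (h2f.sub h2g)
    · intro z hz
      show fderiv ℝ (fun w => fderiv ℝ (fun x => f x - g x) w 1) z 1 +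
        fderiv ℝ (fun w => fderiv ℝ (fun x => f x - g x) w Complex.I) z Complex.I = 0
      rw [pxx_sub isOpen_ball h2f h2g hz 1, pxx_sub isOpen_ball h2f h2g hz Complex.I]
      have := hlf z hz; have := hlg z hz
      linarith
    · intro z hz
      show f z - g z ≤ 0
      rw [hbfg z hz]; simp
  intro z hz
  have h1 := key u k hcu hck h2u h2k hlapu hlapk hb z hz
  have h2 := key k u hck hcu h2k h2u hlapk hlapu (fun z hz => (hb z hz).symm) z hz
  linarith

-- first-order Cauchy-Riemann style computations
lemma px_re {F : ℂ → ℂ} {G' z : ℂ} (h : HasDerivAt F G' z) :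
    fderiv ℝ (fun x => (F x).re) z 1 = G'.re := by simpa using re_fderiv h 1
lemma py_re {F : ℂ → ℂ} {G' z : ℂ} (h : HasDerivAt F G' z) :
    fderiv ℝ (fun x => (F x).re) z Complex.I = -G'.im := by
  simpa [Complex.mul_re] using re_fderiv h Complex.I
lemma px_im {F : ℂ → ℂ} {G' z : ℂ} (h : HasDerivAt F G' z) :
    fderiv ℝ (fun x => (F x).im) z 1 = G'.im := by simpa using im_fderiv h 1
lemma py_im {F : ℂ → ℂ} {G' z : ℂ} (h : HasDerivAt F G' z) :
    fderiv ℝ (fun x => (F x).im) z Complex.I = G'.re := by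
  simpa [Complex.mul_im] using im_fderiv h Complex.I

-- second-order computations
section second
variable {F G H : ℂ → ℂ} {U : Set ℂ} (hU : IsOpen U)
  (hFG : ∀ z ∈ U, HasDerivAt F (G z) z) (hGH : ∀ z ∈ U, HasDerivAt G (H z) z)
  {z : ℂ} (hz : z ∈ U)

include hU hFG hGH hz

lemma Cre1 (v : ℂ) :
    fderiv ℝ (fun w => fderiv ℝ (fun x => (F x).re) w 1) z v = (H z * v).re := by
  have he : (fun w => fderiv ℝ (fun x => (F x).re) w 1) =ᶠ[nhds z] (fun w => (G w).re) := by
    filter_upwards [hU.mem_nhds hz] with w hw; exact px_re (hFG w hw)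
  rw [he.fderiv_eq]; exact re_fderiv (hGH z hz) v

lemma CreI (v : ℂ) :
    fderiv ℝ (fun w => fderiv ℝ (fun x => (F x).re) w Complex.I) z v = -(H z * v).im := by
  have he : (fun w => fderiv ℝ (fun x => (F x).re) w Complex.I) =ᶠ[nhds z]
      (fun w => -(G w).im) := by
    filter_upwards [hU.mem_nhds hz] with w hw; exact py_re (hFG w hw)
  rw [he.fderiv_eq]
  have : fderiv ℝ (fun w => -(G w).im) z = -fderiv ℝ (fun w => (G w).im) z := fderiv_neg
  rw [this]
  simp [im_fderiv (hGH z hz) v]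

lemma Cim1 (v : ℂ) :
    fderiv ℝ (fun w => fderiv ℝ (fun x => (F x).im) w 1) z v = (H z * v).im := by
  have he : (fun w => fderiv ℝ (fun x => (F x).im) w 1) =ᶠ[nhds z] (fun w => (G w).im) := by
    filter_upwards [hU.mem_nhds hz] with w hw; exact px_im (hFG w hw)
  rw [he.fderiv_eq]; exact im_fderiv (hGH z hz) v

lemma CimI (v : ℂ) :
    fderiv ℝ (fun w => fderiv ℝ (fun x => (F x).im) w Complex.I) z v = (H z * v).re := by
  have he : (fun w => fderiv ℝ (fun x => (F x).im) w Complex.I) =ᶠ[nhds z]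
      (fun w => (G w).re) := by
    filter_upwards [hU.mem_nhds hz] with w hw; exact py_im (hFG w hw)
  rw [he.fderiv_eq]; exact re_fderiv (hGH z hz) v

end second

-- the explicit holomorphic data
section explicit
variable (c : ℂ)

def UU : Set ℂ := {z : ℂ | (1 : ℂ) - c * z ≠ 0}
def FF : ℂ → ℂ := fun z => z ^ 2 / (1 - c * z) ^ 2
def GG : ℂ → ℂ := fun z => 2 * z / (1 - c * z) ^ 3
def HH : ℂ → ℂ := fun z => (2 + 4 * c * z) / (1 - c * z) ^ 4

lemma UU_open : IsOpen (UU c) := by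
  have : UU c = (fun z => (1 : ℂ) - c * z) ⁻¹' {(0:ℂ)}ᶜ := rfl
  rw [this]
  exact (isOpen_compl_singleton).preimage (by continuity)

lemma den_hasDerivAt (z : ℂ) : HasDerivAt (fun z => (1 : ℂ) - c * z) (-c) z := by
  simpa using ((hasDerivAt_id z).const_mul c).const_sub 1

lemma FF_deriv {z : ℂ} (hz : z ∈ UU c) : HasDerivAt (FF c) (GG c z) z := by
  have hne : ((1 : ℂ) - c * z) ≠ 0 := hz
  have hd := (hasDerivAt_pow 2 z).div ((den_hasDerivAt c z).pow 2) (pow_ne_zero 2 hne)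
  refine hd.congr_deriv ?_
  unfold GG
  simp only [Pi.pow_apply]
  field_simp
  ring

lemma GG_deriv {z : ℂ} (hz : z ∈ UU c) : HasDerivAt (GG c) (HH c z) z := by
  have hne : ((1 : ℂ) - c * z) ≠ 0 := hz
  have hnum : HasDerivAt (fun z : ℂ => 2 * z) 2 z := by
    simpa using (hasDerivAt_id z).const_mul (2:ℂ)
  have hd := hnum.div ((den_hasDerivAt c z).pow 3) (pow_ne_zero 3 hne)
  refine hd.congr_deriv ?_
  unfold HH
  simp only [Pi.pow_apply]
  field_simp
  ring

lemma FF_diffOn : DifferentiableOn ℂ (FF c) (UU c) := fun z hz =>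
  ((FF_deriv c hz).differentiableAt.differentiableWithinAt)

end explicit

lemma boundary_eq (ξ : ℂ) (hξ : ‖ξ‖ < 1) {z : ℂ} (hz : z ∈ sphere (0:ℂ) 1) :
    (FF ((starRingEnd ℂ) ξ) z).re =
      ((z.re - ξ.re) ^ 2 - (z.im - ξ.im) ^ 2) /
        ((z.re - ξ.re) ^ 2 + (z.im - ξ.im) ^ 2) ^ 2 ∧
    (FF ((starRingEnd ℂ) ξ) z).im =
      2 * (z.re - ξ.re) * (z.im - ξ.im) /
        ((z.re - ξ.re) ^ 2 + (z.im - ξ.im) ^ 2) ^ 2 := by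
  set c := (starRingEnd ℂ) ξ with hcdef
  have habs : ‖z‖ = 1 := by simpa using hz
  have hnsq : Complex.normSq z = 1 := by rw [← Complex.sq_norm, habs]; norm_num
  have hzne : z ≠ 0 := by intro h; rw [h] at habs; simp at habs
  have hzξ : z - ξ ≠ 0 := by
    intro h
    have : z = ξ := by linear_combination h
    rw [this] at habs; exact absurd habs (ne_of_lt hξ)
  set d := (starRingEnd ℂ) (z - ξ) with hddef
  have hdne : d ≠ 0 := by
    rw [hddef, ← map_zero (starRingEnd ℂ)]
    exact fun h => hzξ ((starRingEnd ℂ).injective h)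
  have key1 : z * d = 1 - c * z := by
    rw [hddef, map_sub, mul_sub, Complex.mul_conj, hnsq, hcdef]
    push_cast; ring
  have keyF : FF c z = 1 / d ^ 2 := by
    unfold FF
    rw [← key1, mul_pow]
    rw [div_eq_div_iff (by exact mul_ne_zero (pow_ne_zero 2 hzne) (pow_ne_zero 2 hdne))
      (pow_ne_zero 2 hdne)]
    ring
  have key2 : (z - ξ) * d = (Complex.normSq (z - ξ) : ℂ) := by
    rw [hddef, Complex.mul_conj]
  have hNne : (Complex.normSq (z - ξ) : ℝ) ≠ 0 := by
    simpa using hzξ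
  have keyG : FF c z = (z - ξ) ^ 2 / ((Complex.normSq (z - ξ) ^ 2 : ℝ) : ℂ) := by
    rw [keyF]
    rw [div_eq_div_iff (pow_ne_zero 2 hdne)
      (Complex.ofReal_ne_zero.mpr (pow_ne_zero 2 hNne))]
    rw [one_mul, ← mul_pow, key2]
    push_cast
    ring
  have hnormval : Complex.normSq (z - ξ) = (z.re - ξ.re) ^ 2 + (z.im - ξ.im) ^ 2 := by
    rw [Complex.normSq_apply, Complex.sub_re, Complex.sub_im]
    ring
  have hsqre : ((z - ξ) ^ 2).re = (z.re - ξ.re) ^ 2 - (z.im - ξ.im) ^ 2 := by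
    rw [pow_two, Complex.mul_re, Complex.sub_re, Complex.sub_im]; ring
  have hsqim : ((z - ξ) ^ 2).im = 2 * (z.re - ξ.re) * (z.im - ξ.im) := by
    rw [pow_two, Complex.mul_im, Complex.sub_re, Complex.sub_im]; ring
  constructor
  · rw [keyG, Complex.div_ofReal_re, hsqre, hnormval]
  · rw [keyG, Complex.div_ofReal_im, hsqim, hnormval]


/-- Values and derivatives up to second order at `ξ` of the harmonic extension of the degree-2
boundary data `h^{(1)}`. -/
theorem robin_function_h1_low_order (ξ : ℂ) (hξ : ξ ∈ ball (0 : ℂ) 1)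
    (h1 h2 : ℂ → ℝ)
    (hc1 : ContinuousOn h1 (closedBall (0 : ℂ) 1))
    (hc2 : ContinuousOn h2 (closedBall (0 : ℂ) 1))
    (hh1 : HarmonicOnSet h1 (ball (0 : ℂ) 1))
    (hh2 : HarmonicOnSet h2 (ball (0 : ℂ) 1))
    (hb1 : ∀ z ∈ sphere (0 : ℂ) 1,
      h1 z = ((z.re - ξ.re) ^ 2 - (z.im - ξ.im) ^ 2) /
        ((z.re - ξ.re) ^ 2 + (z.im - ξ.im) ^ 2) ^ 2)
    (hb2 : ∀ z ∈ sphere (0 : ℂ) 1,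
      h2 z = 2 * (z.re - ξ.re) * (z.im - ξ.im) /
        ((z.re - ξ.re) ^ 2 + (z.im - ξ.im) ^ 2) ^ 2) :
    h1 ξ = (ξ.re ^ 2 - ξ.im ^ 2) / (1 - (ξ.re ^ 2 + ξ.im ^ 2)) ^ 2 ∧
    h2 ξ = 2 * ξ.re * ξ.im / (1 - (ξ.re ^ 2 + ξ.im ^ 2)) ^ 2 ∧
    px h1 ξ = 2 * ξ.re / (1 - (ξ.re ^ 2 + ξ.im ^ 2)) ^ 3 ∧
    py h2 ξ = 2 * ξ.re / (1 - (ξ.re ^ 2 + ξ.im ^ 2)) ^ 3 ∧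
    py h1 ξ = -(2 * ξ.im) / (1 - (ξ.re ^ 2 + ξ.im ^ 2)) ^ 3 ∧
    px h2 ξ = 2 * ξ.im / (1 - (ξ.re ^ 2 + ξ.im ^ 2)) ^ 3 ∧
    px (px h1) ξ = 2 * (1 + 2 * (ξ.re ^ 2 + ξ.im ^ 2)) / (1 - (ξ.re ^ 2 + ξ.im ^ 2)) ^ 4 ∧
    px (py h2) ξ = 2 * (1 + 2 * (ξ.re ^ 2 + ξ.im ^ 2)) / (1 - (ξ.re ^ 2 + ξ.im ^ 2)) ^ 4 ∧
    py (py h1) ξ = -(2 * (1 + 2 * (ξ.re ^ 2 + ξ.im ^ 2))) / (1 - (ξ.re ^ 2 + ξ.im ^ 2)) ^ 4 ∧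
    px (py h1) ξ = 0 ∧ px (px h2) ξ = 0 ∧ py (py h2) ξ = 0 := by
  set c := (starRingEnd ℂ) ξ with hcdef
  have hξabs : ‖ξ‖ < 1 := by simpa using hξ
  have hsubU : closedBall (0:ℂ) 1 ⊆ UU c := by
    intro z hz
    have hz1 : ‖z‖ ≤ 1 := by simpa using hz
    show (1:ℂ) - c * z ≠ 0
    intro h
    have hcz : c * z = 1 := by linear_combination -h
    have h2' : ‖c‖ * ‖z‖ = 1 := by
      rw [← norm_mul, hcz]; simp
    have hca : ‖c‖ = ‖ξ‖ := by simp [hcdef]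
    nlinarith [norm_nonneg z, norm_nonneg ξ]
  have hUo := UU_open c
  have hFG : ∀ z ∈ UU c, HasDerivAt (FF c) (GG c z) z := fun z hz => FF_deriv c hz
  have hGH : ∀ z ∈ UU c, HasDerivAt (GG c) (HH c z) z := fun z hz => GG_deriv c hz
  have hballU : ball (0:ℂ) 1 ⊆ UU c := fun z hz => hsubU (ball_subset_closedBall hz)
  have hξU : ξ ∈ UU c := hballU hξ
  have hξcb : ξ ∈ closedBall (0:ℂ) 1 := ball_subset_closedBall hξ
  -- smoothness
  have hFan : ContDiffOn ℂ 2 (FF c) (UU c) := (FF_diffOn c).contDiffOn hUo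
  have hFR : ContDiffOn ℝ 2 (FF c) (ball 0 1) := (hFan.restrict_scalars ℝ).mono hballU
  have hreC2 : ContDiffOn ℝ 2 (fun x => (FF c x).re) (ball 0 1) :=
    Complex.reCLM.contDiff.comp_contDiffOn hFR
  have himC2 : ContDiffOn ℝ 2 (fun x => (FF c x).im) (ball 0 1) :=
    Complex.imCLM.contDiff.comp_contDiffOn hFR
  have hFcont : ContinuousOn (FF c) (closedBall 0 1) :=
    ((FF_diffOn c).continuousOn).mono hsubU
  have hreCont : ContinuousOn (fun x => (FF c x).re) (closedBall 0 1) :=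
    Complex.continuous_re.comp_continuousOn hFcont
  have himCont : ContinuousOn (fun x => (FF c x).im) (closedBall 0 1) :=
    Complex.continuous_im.comp_continuousOn hFcont
  -- Laplacians of the extensions vanish
  have hlapRe : ∀ z ∈ ball (0:ℂ) 1,
      fderiv ℝ (fun w => fderiv ℝ (fun x => (FF c x).re) w 1) z 1 +
      fderiv ℝ (fun w => fderiv ℝ (fun x => (FF c x).re) w Complex.I) z Complex.I = 0 := by
    intro z hz
    rw [Cre1 hUo hFG hGH (hballU hz) 1, CreI hUo hFG hGH (hballU hz) Complex.I]
    simp [Complex.mul_re, Complex.mul_im]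
  have hlapIm : ∀ z ∈ ball (0:ℂ) 1,
      fderiv ℝ (fun w => fderiv ℝ (fun x => (FF c x).im) w 1) z 1 +
      fderiv ℝ (fun w => fderiv ℝ (fun x => (FF c x).im) w Complex.I) z Complex.I = 0 := by
    intro z hz
    rw [Cim1 hUo hFG hGH (hballU hz) 1, CimI hUo hFG hGH (hballU hz) Complex.I]
    simp [Complex.mul_re, Complex.mul_im]
  -- uniqueness
  have h1eq : ∀ z ∈ closedBall (0:ℂ) 1, h1 z = (FF c z).re := by
    refine harm_eq hc1 hreCont hh1.1 hreC2 (fun z hz => hh1.2 z hz) hlapRe ?_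
    intro z hz
    rw [hb1 z hz, (boundary_eq ξ hξabs hz).1]
  have h2eq : ∀ z ∈ closedBall (0:ℂ) 1, h2 z = (FF c z).im := by
    refine harm_eq hc2 himCont hh2.1 himC2 (fun z hz => hh2.2 z hz) hlapIm ?_
    intro z hz
    rw [hb2 z hz, (boundary_eq ξ hξabs hz).2]
  have hball1 : ∀ z ∈ ball (0:ℂ) 1, h1 z = (FF c z).re :=
    fun z hz => h1eq z (ball_subset_closedBall hz)
  have hball2 : ∀ z ∈ ball (0:ℂ) 1, h2 z = (FF c z).im :=
    fun z hz => h2eq z (ball_subset_closedBall hz)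
  -- eventual equalities
  have hev1 : h1 =ᶠ[nhds ξ] (fun x => (FF c x).re) := by
    filter_upwards [isOpen_ball.mem_nhds hξ] with w hw using hball1 w hw
  have hev2 : h2 =ᶠ[nhds ξ] (fun x => (FF c x).im) := by
    filter_upwards [isOpen_ball.mem_nhds hξ] with w hw using hball2 w hw
  have hevpx1 : ∀ v : ℂ, (fun w => fderiv ℝ h1 w v) =ᶠ[nhds ξ]
      (fun w => fderiv ℝ (fun x => (FF c x).re) w v) := by
    intro v
    filter_upwards [isOpen_ball.mem_nhds hξ] with w hw
    have hev : h1 =ᶠ[nhds w] (fun x => (FF c x).re) := by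
      filter_upwards [isOpen_ball.mem_nhds hw] with y hy using hball1 y hy
    rw [hev.fderiv_eq]
  have hevpx2 : ∀ v : ℂ, (fun w => fderiv ℝ h2 w v) =ᶠ[nhds ξ]
      (fun w => fderiv ℝ (fun x => (FF c x).im) w v) := by
    intro v
    filter_upwards [isOpen_ball.mem_nhds hξ] with w hw
    have hev : h2 =ᶠ[nhds w] (fun x => (FF c x).im) := by
      filter_upwards [isOpen_ball.mem_nhds hw] with y hy using hball2 y hy
    rw [hev.fderiv_eq]
  -- values at ξ
  set s : ℝ := ξ.re ^ 2 + ξ.im ^ 2 with hsdef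
  have hns : Complex.normSq ξ = s := by
    rw [Complex.normSq_apply, hsdef]; ring
  have hs1 : s < 1 := by
    nlinarith [hns, Complex.sq_norm ξ, hξabs, norm_nonneg ξ]
  have hd0 : (0:ℝ) < 1 - s := by linarith
  have hcx : c * ξ = ((s : ℝ) : ℂ) := by
    rw [hcdef, mul_comm, Complex.mul_conj, hns]
  have hden : ∀ k : ℕ, ((1:ℂ) - c * ξ) ^ k = (((1 - s) ^ k : ℝ) : ℂ) := by
    intro k; rw [hcx]; push_cast; ring
  have hFre : (FF c ξ).re = (ξ.re ^ 2 - ξ.im ^ 2) / (1 - s) ^ 2 := by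
    unfold FF
    rw [hden 2, Complex.div_ofReal_re]
    congr 1
    rw [pow_two, Complex.mul_re]; ring
  have hFim : (FF c ξ).im = 2 * ξ.re * ξ.im / (1 - s) ^ 2 := by
    unfold FF
    rw [hden 2, Complex.div_ofReal_im]
    congr 1
    rw [pow_two, Complex.mul_im]; ring
  have hGre : (GG c ξ).re = 2 * ξ.re / (1 - s) ^ 3 := by
    unfold GG
    rw [hden 3, Complex.div_ofReal_re]
    congr 1
    simp [Complex.mul_re]
  have hGim : (GG c ξ).im = 2 * ξ.im / (1 - s) ^ 3 := by
    unfold GG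
    rw [hden 3, Complex.div_ofReal_im]
    congr 1
    simp [Complex.mul_im]
  have hHval : HH c ξ = (((2 + 4 * s) / (1 - s) ^ 4 : ℝ) : ℂ) := by
    unfold HH
    rw [hden 4, mul_assoc, hcx]
    push_cast
    ring
  have hHre : (HH c ξ).re = (2 + 4 * s) / (1 - s) ^ 4 := by
    rw [hHval]; exact Complex.ofReal_re _
  have hHim : (HH c ξ).im = 0 := by rw [hHval]; exact Complex.ofReal_im _
  refine ⟨?_, ?_, ?_, ?_, ?_, ?_, ?_, ?_, ?_, ?_, ?_, ?_⟩
  · rw [h1eq ξ hξcb, hFre]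
  · rw [h2eq ξ hξcb, hFim]
  · show fderiv ℝ h1 ξ 1 = _
    rw [hev1.fderiv_eq, px_re (hFG ξ hξU), hGre]
  · show fderiv ℝ h2 ξ Complex.I = _
    rw [hev2.fderiv_eq, py_im (hFG ξ hξU), hGre]
  · show fderiv ℝ h1 ξ Complex.I = _
    rw [hev1.fderiv_eq, py_re (hFG ξ hξU), hGim]; ring
  · show fderiv ℝ h2 ξ 1 = _
    rw [hev2.fderiv_eq, px_im (hFG ξ hξU), hGim]
  · show fderiv ℝ (fun w => fderiv ℝ h1 w 1) ξ 1 = _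
    rw [(hevpx1 1).fderiv_eq, Cre1 hUo hFG hGH hξU 1]
    rw [mul_one, hHre]
    rw [div_eq_div_iff (pow_ne_zero 4 hd0.ne') (pow_ne_zero 4 hd0.ne')]
    ring
  · show fderiv ℝ (fun w => fderiv ℝ h2 w Complex.I) ξ 1 = _
    rw [(hevpx2 Complex.I).fderiv_eq, CimI hUo hFG hGH hξU 1]
    rw [mul_one, hHre]
    rw [div_eq_div_iff (pow_ne_zero 4 hd0.ne') (pow_ne_zero 4 hd0.ne')]
    ring
  · show fderiv ℝ (fun w => fderiv ℝ h1 w Complex.I) ξ Complex.I = _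
    rw [(hevpx1 Complex.I).fderiv_eq, CreI hUo hFG hGH hξU Complex.I]
    rw [show ((HH c ξ) * Complex.I).im = (HH c ξ).re from by simp [Complex.mul_im]]
    rw [hHre]
    field_simp
    ring
  · show fderiv ℝ (fun w => fderiv ℝ h1 w Complex.I) ξ 1 = _
    rw [(hevpx1 Complex.I).fderiv_eq, CreI hUo hFG hGH hξU 1]
    simp [Complex.mul_im, hHim, hHre]
  · show fderiv ℝ (fun w => fderiv ℝ h2 w 1) ξ 1 = _
    rw [(hevpx2 1).fderiv_eq, Cim1 hUo hFG hGH hξU 1]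
    simp [Complex.mul_im, hHim]
  · show fderiv ℝ (fun w => fderiv ℝ h2 w Complex.I) ξ Complex.I = _
    rw [(hevpx2 Complex.I).fderiv_eq, CimI hUo hFG hGH hξU Complex.I]
    simp [Complex.mul_re, hHim]
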